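/- Let x < y be real numbers, let α₁, α₂, α₃, α₄ satisfy 1 = α₁ > α₂ > α₃ > α₄ = 0, let a₁, a₂, a₃, a₄ be reals with a₁ + a₂ + a₃ + a₄ = 0, and suppose conditions (M1) and (E1) hold. If a₁ > −1, then for every continuous convex function f : [x,y] → ℝ and every antiderivative F of f one has (Σ_{i=1}^{4} aᵢF(αᵢx + (1−αᵢ)y))/(y−x) ≤ (1/(y−x)) ∫ₓʸ f(t) dt ≤ (f(x)+f(y))/2. -/

import Mathlib

open Set MeasureTheory intervalIntegral

private lemma integral_affine' (c d u v : ℝ) :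
    ∫ t in u..v, (c + d*t) = c*(v-u) + d*(v^2-u^2)/2 := by
  have h1 : IntervalIntegrable (fun _ : ℝ => c) volume u v := intervalIntegrable_const
  have h2 : IntervalIntegrable (fun t : ℝ => d*t) volume u v :=
    (intervalIntegral.intervalIntegrable_id).const_mul d
  rw [intervalIntegral.integral_add h1 h2, intervalIntegral.integral_const,
    intervalIntegral.integral_const_mul, integral_id]
  simp [smul_eq_mul]; ring

set_option maxHeartbeats 1000000 in
/-- Theorem 1(i): if a₁ > -1 then (∑ aᵢF(αᵢx+(1-αᵢ)y))/(y-x) ≤ (1/(y-x))∫ₓʸ f ≤ (f(x)+f(y))/2. -/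
theorem stmt_10 (x y : ℝ) (hxy : x < y) (α₁ α₂ α₃ α₄ a₁ a₂ a₃ a₄ : ℝ)
    (hα₁ : α₁ = 1) (h12 : α₂ < α₁) (h23 : α₃ < α₂) (h34 : α₄ < α₃) (hα₄ : α₄ = 0)
    (ha : a₁ + a₂ + a₃ + a₄ = 0)
    (hM1 : a₁ * (α₂ - α₁) + (a₁ + a₂) * (α₃ - α₂) + (a₁ + a₂ + a₃) * (α₄ - α₃) = 1)
    (hE1 : a₁ * (α₂ ^ 2 - α₁ ^ 2) + (a₁ + a₂) * (α₃ ^ 2 - α₂ ^ 2)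
        + (a₁ + a₂ + a₃) * (α₄ ^ 2 - α₃ ^ 2) = 1)
    (ha₁ : -1 < a₁)
    (f F : ℝ → ℝ)
    (hf_cont : ContinuousOn f (Set.Icc x y)) (hf_conv : ConvexOn ℝ (Set.Icc x y) f)
    (hF : ∀ t ∈ Set.Icc x y, HasDerivWithinAt F (f t) (Set.Icc x y) t) :
    (a₁ * F (α₁ * x + (1 - α₁) * y) + a₂ * F (α₂ * x + (1 - α₂) * y)
          + a₃ * F (α₃ * x + (1 - α₃) * y) + a₄ * F (α₄ * x + (1 - α₄) * y)) / (y - x)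
        ≤ (1 / (y - x)) * ∫ t in x..y, f t ∧
      (1 / (y - x)) * (∫ t in x..y, f t) ≤ (f x + f y) / 2 := by
  subst hα₁ hα₄
  have hyx : (0:ℝ) < y - x := by linarith
  have hα₂1 : α₂ < 1 := h12
  have hα₃0 : 0 < α₃ := h34
  have hα₂0 : 0 < α₂ := lt_trans hα₃0 h23
  have hα₃1 : α₃ < 1 := lt_trans h23 h12
  set p := α₂ * x + (1 - α₂) * y with hp
  set q := α₃ * x + (1 - α₃) * y with hq
  have hxp : x < p := by
    have := mul_pos (show (0:ℝ) < 1 - α₂ by linarith) hyx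
    rw [hp]; linarith
  have hpq : p < q := by
    have := mul_pos (show (0:ℝ) < α₂ - α₃ by linarith) hyx
    rw [hp, hq]; linarith
  have hqy : q < y := by
    have := mul_pos hα₃0 hyx
    rw [hq]; linarith
  have hqp : (0:ℝ) < q - p := by linarith
  have ex : (1:ℝ) * x + (1 - 1) * y = x := by ring
  have ey : (0:ℝ) * x + (1 - 0) * y = y := by ring
  rw [ex, ey]
  -- chord inequality from convexity
  have chord : ∀ u v w : ℝ, u ∈ Icc x y → w ∈ Icc x y → u ≤ v → v ≤ w → u < w →
      (w - u) * f v ≤ (w - v) * f u + (v - u) * f w := by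
    intro u v w hu hw huv hvw huw
    have hwu : (0:ℝ) < w - u := by linarith
    have h := hf_conv.2 hu hw (div_nonneg (by linarith : (0:ℝ) ≤ w - v) hwu.le)
      (div_nonneg (by linarith : (0:ℝ) ≤ v - u) hwu.le)
      (by field_simp; ring)
    simp only [smul_eq_mul] at h
    have hv : (w-v)/(w-u) * u + (v-u)/(w-u) * w = v := by field_simp; ring
    rw [hv] at h
    have h2 := mul_le_mul_of_nonneg_left h hwu.le
    have e : (w-u) * ((w-v)/(w-u) * f u + (v-u)/(w-u) * f w)
        = (w-v)*f u + (v-u)*f w := by field_simp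
    rw [e] at h2
    linarith
  -- continuity / integrability
  have hFcont : ContinuousOn F (Icc x y) := fun t ht => (hF t ht).continuousWithinAt
  have ftc : ∀ u v : ℝ, x ≤ u → u ≤ v → v ≤ y → ∫ t in u..v, f t = F v - F u := by
    intro u v hxu huv hvy
    apply intervalIntegral.integral_eq_sub_of_hasDeriv_right_of_le huv
      (hFcont.mono (Icc_subset_Icc hxu hvy))
    · intro t ht
      have htxy : t ∈ Ioo x y := ⟨lt_of_le_of_lt hxu ht.1, lt_of_lt_of_le ht.2 hvy⟩
      exact ((hF t (Ioo_subset_Icc_self htxy)).hasDerivAt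
        (Icc_mem_nhds htxy.1 htxy.2)).hasDerivWithinAt
    · exact (hf_cont.mono (Icc_subset_Icc hxu hvy)).intervalIntegrable_of_Icc huv
  have intf : ∀ u v : ℝ, x ≤ u → u ≤ v → v ≤ y → IntervalIntegrable f volume u v :=
    fun u v hxu huv hvy =>
      (hf_cont.mono (Icc_subset_Icc hxu hvy)).intervalIntegrable_of_Icc huv
  have intaff : ∀ c d u v : ℝ, IntervalIntegrable (fun t => c + d*t) volume u v :=
    fun c d u v => (continuous_const.add (continuous_const.mul continuous_id)).intervalIntegrable u v
  -- the slope of the chord through (p, f p) and (q, f q)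
  set m := (f q - f p) / (q - p) with hmdef
  have hm : m * (q - p) = f q - f p := div_mul_cancel₀ _ (ne_of_gt hqp)
  -- pointwise inequalities against the chord line t ↦ (f p - m*p) + m*t
  have hg1 : ∀ t ∈ Icc x p, (f p - m*p) + m*t ≤ f t := by
    intro t ht
    have h := chord t p q ⟨ht.1, by linarith [ht.2]⟩ ⟨by linarith, by linarith⟩ ht.2
      hpq.le (by linarith [ht.2])
    have key : (q-p)*(f t - ((f p - m*p) + m*t))
        = (q-p)*f t + (p-t)*f q - (q-t)*f p := by linear_combination (p - t) * hm
    have h0 := le_of_mul_le_mul_left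
      (by linarith : (q-p) * (0:ℝ) ≤ (q-p)*(f t - ((f p - m*p) + m*t))) hqp
    linarith
  have hg2 : ∀ t ∈ Icc p q, f t ≤ (f p - m*p) + m*t := by
    intro t ht
    have h := chord p t q ⟨hxp.le, by linarith⟩ ⟨by linarith, hqy.le⟩ ht.1 ht.2 hpq
    have key : (q-p)*(((f p - m*p) + m*t) - f t)
        = (q-t)*f p + (t-p)*f q - (q-p)*f t := by linear_combination (t - p) * hm
    have h0 := le_of_mul_le_mul_left
      (by linarith : (q-p) * (0:ℝ) ≤ (q-p)*(((f p - m*p) + m*t) - f t)) hqp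
    linarith
  have hg3 : ∀ t ∈ Icc q y, (f p - m*p) + m*t ≤ f t := by
    intro t ht
    have h := chord p q t ⟨hxp.le, by linarith⟩ ⟨by linarith [ht.1], ht.2⟩ hpq.le ht.1 (by linarith [ht.1])
    have key : (q-p)*(f t - ((f p - m*p) + m*t))
        = (q-p)*f t - (q-t)*f p - (t-p)*f q := by linear_combination (p - t) * hm
    have h0 := le_of_mul_le_mul_left
      (by linarith : (q-p) * (0:ℝ) ≤ (q-p)*(f t - ((f p - m*p) + m*t))) hqp
    linarith
  -- integral comparisons
  have hJ1 : ∫ t in x..p, ((f p - m*p) + m*t)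
      = (f p - m*p)*(p-x) + m*(p^2-x^2)/2 := integral_affine' _ _ _ _
  have hJ2 : ∫ t in p..q, ((f p - m*p) + m*t)
      = (f p - m*p)*(q-p) + m*(q^2-p^2)/2 := integral_affine' _ _ _ _
  have hJ3 : ∫ t in q..y, ((f p - m*p) + m*t)
      = (f p - m*p)*(y-q) + m*(y^2-q^2)/2 := integral_affine' _ _ _ _
  have m1 : (f p - m*p)*(p-x) + m*(p^2-x^2)/2 ≤ F p - F x := by
    rw [← hJ1, ← ftc x p le_rfl hxp.le (by linarith)]
    exact intervalIntegral.integral_mono_on hxp.le (intaff _ _ _ _)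
      (intf x p le_rfl hxp.le (by linarith)) hg1
  have m2 : F q - F p ≤ (f p - m*p)*(q-p) + m*(q^2-p^2)/2 := by
    rw [← hJ2, ← ftc p q hxp.le hpq.le (by linarith)]
    exact intervalIntegral.integral_mono_on hpq.le
      (intf p q hxp.le hpq.le (by linarith)) (intaff _ _ _ _) hg2
  have m3 : (f p - m*p)*(y-q) + m*(y^2-q^2)/2 ≤ F y - F q := by
    rw [← hJ3, ← ftc q y (by linarith) hqy.le le_rfl]
    exact intervalIntegral.integral_mono_on hqy.le (intaff _ _ _ _)
      (intf q y (by linarith) hqy.le le_rfl) hg3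
  -- algebraic consequences of (M1), (E1)
  have s1 : a₁ * 1 + a₂ * α₂ + a₃ * α₃ = -1 := by linear_combination -hM1
  have s2 : a₁ + a₂ * α₂^2 + a₃ * α₃^2 = -1 := by linear_combination -hE1
  have hQ1 : a₁*x + a₂*p + a₃*q + a₄*y = y - x := by
    rw [hp, hq]; linear_combination (x - y)*s1 + y*ha
  have hQ2 : a₁*x^2 + a₂*p^2 + a₃*q^2 + a₄*y^2 = y^2 - x^2 := by
    rw [hp, hq]; linear_combination (2*y*(x-y))*s1 + (x-y)^2*s2 + y^2*ha
  have hc1 : (0:ℝ) < 1 + a₁ := by linarith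
  have hu : (1+a₁)*(1-α₂) + (1+a₁+a₂)*(α₂-α₃) + (1+a₁+a₂+a₃)*α₃ = 0 := by
    linear_combination -hM1
  have hu2 : (1+a₁)*(1-α₂^2) + (1+a₁+a₂)*(α₂^2-α₃^2) + (1+a₁+a₂+a₃)*α₃^2 = 0 := by
    linear_combination -hE1
  have hkey : (1+a₁+a₂+a₃)*α₃*α₂ = (1+a₁)*(1-α₂)*(1-α₃) := by
    linear_combination (α₂+α₃)*hu - hu2
  have hc3 : (0:ℝ) < 1 + a₁ + a₂ + a₃ := by
    have hR : 0 < (1+a₁)*(1-α₂)*(1-α₃) :=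
      mul_pos (mul_pos hc1 (by linarith)) (by linarith)
    by_contra hcon
    push_neg at hcon
    have h1 : (1+a₁+a₂+a₃)*(α₃*α₂) ≤ 0 :=
      mul_nonpos_iff.2 (Or.inr ⟨hcon, (mul_pos hα₃0 hα₂0).le⟩)
    linarith [hkey, h1, hR]
  have hc2 : 1 + a₁ + a₂ < 0 := by
    by_contra hcon
    push_neg at hcon
    have h1 : 0 ≤ (1+a₁+a₂)*(α₂-α₃) := mul_nonneg hcon (by linarith)
    linarith [hu, mul_pos hc1 (show (0:ℝ) < 1-α₂ by linarith), mul_pos hc3 hα₃0, h1]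
  -- the chord line integrates to zero against the weights
  have hz : (1+a₁) * ((f p - m*p)*(p-x) + m*(p^2-x^2)/2)
      + (1+a₁+a₂) * ((f p - m*p)*(q-p) + m*(q^2-p^2)/2)
      + (1+a₁+a₂+a₃) * ((f p - m*p)*(y-q) + m*(y^2-q^2)/2) = 0 := by
    linear_combination (m*p - f p)*hQ1 - (m/2)*hQ2 + ((f p - m*p)*y + m*y^2/2)*ha
  have final : a₁ * F x + a₂ * F p + a₃ * F q + a₄ * F y
      + ((1+a₁) * ((F p - F x) - ((f p - m*p)*(p-x) + m*(p^2-x^2)/2))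
        + (1+a₁+a₂) * ((F q - F p) - ((f p - m*p)*(q-p) + m*(q^2-p^2)/2))
        + (1+a₁+a₂+a₃) * ((F y - F q) - ((f p - m*p)*(y-q) + m*(y^2-q^2)/2)))
      = F y - F x := by
    linear_combination (F y)*ha - hz
  have pos1 : 0 ≤ (1+a₁) * ((F p - F x) - ((f p - m*p)*(p-x) + m*(p^2-x^2)/2)) :=
    mul_nonneg hc1.le (by linarith)
  have pos2 : 0 ≤ (1+a₁+a₂) * ((F q - F p) - ((f p - m*p)*(q-p) + m*(q^2-p^2)/2)) := by
    have := mul_nonneg (by linarith : (0:ℝ) ≤ -(1+a₁+a₂))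
      (by linarith : (0:ℝ) ≤ ((f p - m*p)*(q-p) + m*(q^2-p^2)/2) - (F q - F p))
    linarith [this]
  have pos3 : 0 ≤ (1+a₁+a₂+a₃) * ((F y - F q) - ((f p - m*p)*(y-q) + m*(y^2-q^2)/2)) :=
    mul_nonneg hc3.le (by linarith)
  have hmain : a₁ * F x + a₂ * F p + a₃ * F q + a₄ * F y ≤ F y - F x := by
    linarith [final, pos1, pos2, pos3]
  have hFTCxy : ∫ t in x..y, f t = F y - F x := ftc x y le_rfl hxy.le le_rfl
  constructor
  · rw [hFTCxy, one_div, inv_mul_eq_div]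
    exact (div_le_div_iff_of_pos_right hyx).2 hmain
  · -- Hermite–Hadamard upper bound
    have hub : ∀ t ∈ Icc x y, (y-x) * f t ≤ (y*f x - x*f y) + (f y - f x)*t := by
      intro t ht
      have h := chord x t y (left_mem_Icc.2 hxy.le) (right_mem_Icc.2 hxy.le) ht.1 ht.2 hxy
      linarith [h]
    have hmono : ∫ t in x..y, (y-x) * f t
        ≤ ∫ t in x..y, ((y*f x - x*f y) + (f y - f x)*t) :=
      intervalIntegral.integral_mono_on hxy.le
        ((intf x y le_rfl hxy.le le_rfl).const_mul _) (intaff _ _ _ _) hub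
    rw [intervalIntegral.integral_const_mul, integral_affine'] at hmono
    rw [one_div, inv_mul_le_iff₀ hyx]
    have h2 : (y-x) * (∫ t in x..y, f t) ≤ (y-x) * ((y-x) * ((f x + f y)/2)) := by
      linarith [hmono]
    exact le_of_mul_le_mul_left h2 hyx
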